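/- Let V_c be an N×r complex matrix satisfying A V_c = V_c J_r(λ) with ‖V_c‖₁ = 1. Then the graph total variation is bounded as TV_G(V_c) = ‖V_c − A V_c‖₁ ≤ |1−λ| + 1. (Theorem 4.) -/

import Mathlib

open Matrix

/-- The `r × r` Jordan block `J_r(μ)`: upper triangular with `μ` on the diagonal,
`1` on the superdiagonal, and `0` elsewhere. -/
def jordanBlock (r : ℕ) (μ : ℂ) : Matrix (Fin r) (Fin r) ℂ :=
  Matrix.of fun i j => if (i : ℕ) = (j : ℕ) then μ
    else if (i : ℕ) + 1 = (j : ℕ) then 1 else 0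

/-- The induced L1 matrix norm: the maximum absolute column sum. -/
noncomputable def matL1 {m n : Type*} [Fintype m] [Fintype n]
    (M : Matrix m n ℂ) : ℝ :=
  ⨆ j : n, ∑ i : m, ‖M i j‖

lemma jb_split (r : ℕ) (μ : ℂ) (k j : Fin r) :
    jordanBlock r μ k j = (if k = j then μ else 0) + (if (k:ℕ)+1 = (j:ℕ) then 1 else 0) := by
  simp only [jordanBlock, of_apply]
  rcases eq_or_ne (k:ℕ) (j:ℕ) with h | h
  · have hkj : k = j := Fin.ext h
    simp [hkj]
  · have hkj : k ≠ j := fun e => h (by rw [e])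
    simp [h, hkj]

/-- Theorem 4: if `A V_c = V_c J_r(μ)` and `‖V_c‖₁ = 1`, then the graph total
variation satisfies `TV_G(V_c) = ‖V_c − A V_c‖₁ ≤ |1−μ| + 1`. -/
theorem tv_upper_bound {N r : ℕ} (A : Matrix (Fin N) (Fin N) ℂ) (μ : ℂ)
    (Vc : Matrix (Fin N) (Fin r) ℂ)
    (hchain : A * Vc = Vc * jordanBlock r μ)
    (hnorm : matL1 Vc = 1) :
    matL1 (Vc - A * Vc) ≤ ‖1 - μ‖ + 1 := by
  have hcol : ∀ j : Fin r, ∑ i, ‖Vc i j‖ ≤ 1 := by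
    intro j
    rw [← hnorm]
    exact le_ciSup (f := fun j : Fin r => ∑ i, ‖Vc i j‖) (Set.Finite.bddAbove (Set.finite_range _)) j
  rw [hchain]
  apply Real.iSup_le _ (by positivity)
  intro j
  have hentry : ∀ i, (Vc - Vc * jordanBlock r μ) i j
      = (1 - μ) * Vc i j - ∑ k : Fin r, if (k:ℕ)+1 = (j:ℕ) then Vc i k else 0 := by
    intro i
    simp only [Matrix.sub_apply, Matrix.mul_apply, jb_split, mul_add, mul_ite,
      mul_one, mul_zero, Finset.sum_add_distrib, Finset.sum_ite_eq', Finset.mem_univ, if_true]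
    ring
  calc ∑ i, ‖(Vc - Vc * jordanBlock r μ) i j‖
      ≤ ∑ i, (‖1 - μ‖ * ‖Vc i j‖
          + ∑ k : Fin r, if (k:ℕ)+1 = (j:ℕ) then ‖Vc i k‖ else 0) := by
        apply Finset.sum_le_sum
        intro i _
        rw [hentry i]
        refine le_trans (norm_sub_le _ _) ?_
        gcongr
        · rw [norm_mul]
        · refine le_trans (norm_sum_le _ _) ?_
          apply le_of_eq
          apply Finset.sum_congr rfl
          intro k _
          split <;> simp
    _ = ‖1 - μ‖ * (∑ i, ‖Vc i j‖)
          + ∑ k : Fin r, if (k:ℕ)+1 = (j:ℕ) then (∑ i, ‖Vc i k‖) else 0 := by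
        rw [Finset.sum_add_distrib, Finset.mul_sum, Finset.sum_comm]
        congr 1
        apply Finset.sum_congr rfl
        intro k _
        split <;> simp
    _ ≤ ‖1 - μ‖ * 1 + ∑ k : Fin r, if (k:ℕ)+1 = (j:ℕ) then (1:ℝ) else 0 := by
        gcongr with k
        · exact hcol j
        · split
          · exact hcol k
          · exact le_rfl
    _ ≤ ‖1 - μ‖ + 1 := by
        rw [mul_one]
        gcongr
        calc ∑ k : Fin r, (if (k:ℕ)+1 = (j:ℕ) then (1:ℝ) else 0)
            = ((Finset.univ.filter fun k : Fin r => (k:ℕ)+1 = (j:ℕ)).card : ℝ) := by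
              rw [Finset.sum_boole]
          _ ≤ 1 := by
              norm_cast
              apply Finset.card_le_one.mpr
              intro a ha b hb
              simp only [Finset.mem_filter] at ha hb
              exact Fin.ext (Nat.succ_injective (ha.2.trans hb.2.symm))
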